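/- For all integers m, n, r ≥ 0 and every integer k, in ℤ[q]: c_q^{(m+r)}(n,k) = Σ_{i=0}^{n} q^{r(n-i)} · [m]_q^{⟨n-i⟩} · qbinom(n,i) · c_q^{(r)}(i,k). -/

import Mathlib

open Finset Polynomial

/-- The q-integer [n]_q = 1 + q + ⋯ + q^{n-1} in ℤ[q]. -/
noncomputable def qint (n : ℕ) : Polynomial ℤ := ∑ i ∈ range n, X ^ i

/-- The q-rising factorial [n]_q^{⟨m⟩} = ∏_{i=n}^{n+m-1} [i]_q. -/
noncomputable def qrise (n m : ℕ) : Polynomial ℤ := ∏ i ∈ range m, qint (n + i)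

/-- The q-binomial coefficient. -/
noncomputable def qbinom : ℕ → ℕ → Polynomial ℤ
  | _, 0 => 1
  | 0, _ + 1 => 0
  | n + 1, k + 1 => qbinom n k + X ^ (k + 1) * qbinom n (k + 1)

/-- The q-Stirling numbers of the first kind (natural-number index version). -/
noncomputable def qStirling1Nat : ℕ → ℕ → Polynomial ℤ
  | 0, 0 => 1
  | 0, _ + 1 => 0
  | _ + 1, 0 => 0
  | n + 1, k + 1 => qStirling1Nat n k + qint n * qStirling1Nat n (k + 1)

/-- The q-Stirling numbers of the first kind, vanishing for negative second index. -/
noncomputable def qStirling1 (n : ℕ) (k : ℤ) : Polynomial ℤ :=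
  if 0 ≤ k then qStirling1Nat n k.toNat else 0

/-- The q-r-Stirling numbers of the first kind. -/
noncomputable def qrStirling1 (r n : ℕ) (k : ℤ) : Polynomial ℤ :=
  ∑ i ∈ range (n + 1), qrise r (n - i) * qbinom n i * qStirling1 i k

lemma qint_add (a b : ℕ) : qint (a + b) = qint a + X ^ a * qint b := by
  simp [qint, Finset.sum_range_add, pow_add, Finset.mul_sum]

lemma qrise_succ (n m : ℕ) : qrise n (m + 1) = qrise n m * qint (n + m) := by
  simp [qrise, Finset.prod_range_succ]

lemma qbinom_zero_right (n : ℕ) : qbinom n 0 = 1 := by cases n <;> rfl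

lemma qbinom_succ_succ (n k : ℕ) :
    qbinom (n + 1) (k + 1) = qbinom n k + X ^ (k + 1) * qbinom n (k + 1) := rfl

lemma qbinom_eq_zero : ∀ {n k : ℕ}, n < k → qbinom n k = 0 := by
  intro n
  induction n with
  | zero => intro k h; cases k with | zero => omega | succ k => rfl
  | succ n ih =>
    intro k h
    cases k with
    | zero => omega
    | succ k => rw [qbinom_succ_succ, ih (by omega), ih (by omega)]; ring

lemma qStirling1Nat_zero_mul (n : ℕ) : qint n * qStirling1Nat n 0 = 0 := by
  cases n with
  | zero => simp [qint]
  | succ n => show qint _ * 0 = 0; ring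

lemma qStirling1_succ (n : ℕ) (k : ℤ) :
    qStirling1 (n + 1) k = qStirling1 n (k - 1) + qint n * qStirling1 n k := by
  unfold qStirling1
  by_cases h1 : 1 ≤ k
  · rw [if_pos (by omega), if_pos (by omega), if_pos (by omega)]
    have : k.toNat = (k - 1).toNat + 1 := by omega
    rw [this]
    rfl
  · by_cases h0 : 0 ≤ k
    · have hk : k = 0 := by omega
      subst hk
      rw [if_pos le_rfl, if_neg (by omega), if_pos le_rfl]
      show qStirling1Nat (n + 1) 0 = 0 + qint n * qStirling1Nat n 0
      rw [qStirling1Nat_zero_mul]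
      show (0 : Polynomial ℤ) = 0 + 0
      ring
    · rw [if_neg h0, if_neg (by omega), if_neg h0]; ring

lemma key (w b : ℕ → Polynomial ℤ) (P : ℕ → ℤ → Polynomial ℤ) (c n : ℕ) (k : ℤ)
    (hP : ∀ i k, P (i + 1) k = P i (k - 1) + b i * P i k)
    (hw : ∀ i j, i + j = n → b i * w j + X ^ i * w (j + 1) = qint c * w j) :
    ∑ i ∈ range (n + 2), w (n + 1 - i) * qbinom (n + 1) i * P i k
      = (∑ i ∈ range (n + 1), w (n - i) * qbinom n i * P i (k - 1))
        + qint c * ∑ i ∈ range (n + 1), w (n - i) * qbinom n i * P i k := by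
  have hsplit :
      ∑ i ∈ range (n + 2), w (n + 1 - i) * qbinom (n + 1) i * P i k
        = (∑ i ∈ range (n + 1),
            (w (n - i) * qbinom n i * P i (k - 1)
              + b i * (w (n - i) * qbinom n i * P i k)
              + X ^ (i + 1) * (w (n - (i + 1) + 1) * qbinom n (i + 1) * P (i + 1) k)))
          + w (n + 1) * qbinom (n + 1) 0 * P 0 k := by
    rw [Finset.sum_range_succ']
    congr 1
    refine Finset.sum_congr rfl fun i hi => ?_
    have hi' : i ≤ n := by have := Finset.mem_range.mp hi; omega
    have e1 : n + 1 - (i + 1) = n - i := by omega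
    rw [e1, hP i k, qbinom_succ_succ]
    rcases Nat.lt_or_ge i n with hlt | hge
    · have e2 : n - (i + 1) + 1 = n - i := by omega
      rw [e2]; ring
    · rw [qbinom_eq_zero (show n < i + 1 by omega)]
      ring
  rw [hsplit, Finset.sum_add_distrib, Finset.sum_add_distrib, add_assoc, add_assoc]
  congr 1
  have h2 :
      (∑ i ∈ range (n + 1),
          X ^ (i + 1) * (w (n - (i + 1) + 1) * qbinom n (i + 1) * P (i + 1) k))
        + X ^ 0 * (w (n - 0 + 1) * qbinom n 0 * P 0 k)
      = (∑ i ∈ range (n + 1), X ^ i * (w (n - i + 1) * qbinom n i * P i k))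
        + X ^ (n + 1) * (w (n - (n + 1) + 1) * qbinom n (n + 1) * P (n + 1) k) :=
    (Finset.sum_range_succ' (fun i => X ^ i * (w (n - i + 1) * qbinom n i * P i k))
      (n + 1)).symm.trans
      (Finset.sum_range_succ (fun i => X ^ i * (w (n - i + 1) * qbinom n i * P i k)) (n + 1))
  rw [qbinom_eq_zero (Nat.lt_succ_self n), qbinom_zero_right,
      show n - 0 + 1 = n + 1 from by omega] at h2
  have htail :
      (∑ i ∈ range (n + 1),
          X ^ (i + 1) * (w (n - (i + 1) + 1) * qbinom n (i + 1) * P (i + 1) k))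
        + w (n + 1) * qbinom (n + 1) 0 * P 0 k
      = ∑ i ∈ range (n + 1), X ^ i * (w (n - i + 1) * qbinom n i * P i k) := by
    rw [qbinom_zero_right]
    linear_combination h2
  rw [htail, ← Finset.sum_add_distrib, Finset.mul_sum]
  refine Finset.sum_congr rfl fun i hi => ?_
  have hi' : i ≤ n := by have := Finset.mem_range.mp hi; omega
  have hkey := hw i (n - i) (by omega)
  calc b i * (w (n - i) * qbinom n i * P i k)
        + X ^ i * (w (n - i + 1) * qbinom n i * P i k)
      = (b i * w (n - i) + X ^ i * w (n - i + 1)) * (qbinom n i * P i k) := by ring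
    _ = qint c * w (n - i) * (qbinom n i * P i k) := by rw [hkey]
    _ = qint c * (w (n - i) * qbinom n i * P i k) := by ring

lemma qrStirling1_succ (r n : ℕ) (k : ℤ) :
    qrStirling1 r (n + 1) k
      = qrStirling1 r n (k - 1) + qint (n + r) * qrStirling1 r n k := by
  unfold qrStirling1
  exact key (qrise r) qint qStirling1 (n + r) n k qStirling1_succ
    (fun i j hij => by
      have e : qint (n + r) = qint i + X ^ i * qint (r + j) := by
        rw [show n + r = i + (r + j) from by omega]; exact qint_add i (r + j)
      rw [qrise_succ, e]
      ring)

lemma qrStirling1_shift_succ (m r n : ℕ) (k : ℤ) :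
    ∑ i ∈ range (n + 2),
        X ^ (r * (n + 1 - i)) * qrise m (n + 1 - i) * qbinom (n + 1) i * qrStirling1 r i k
      = (∑ i ∈ range (n + 1),
          X ^ (r * (n - i)) * qrise m (n - i) * qbinom n i * qrStirling1 r i (k - 1))
        + qint (n + m + r)
          * ∑ i ∈ range (n + 1),
              X ^ (r * (n - i)) * qrise m (n - i) * qbinom n i * qrStirling1 r i k := by
  have h := key (fun j => X ^ (r * j) * qrise m j) (fun i => qint (i + r))
    (qrStirling1 r) (n + m + r) n k (fun i k => qrStirling1_succ r i k)
    (fun i j hij => by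
      have e : qint (n + m + r) = qint (i + r) + X ^ (i + r) * qint (m + j) := by
        rw [show n + m + r = (i + r) + (m + j) from by omega]
        exact qint_add (i + r) (m + j)
      have e2 : (X : Polynomial ℤ) ^ (r * (j + 1)) = X ^ (r * j) * X ^ r := by
        rw [show r * (j + 1) = r * j + r from by ring, pow_add]
      have e3 : (X : Polynomial ℤ) ^ (i + r) = X ^ i * X ^ r := pow_add X i r
      rw [qrise_succ, e2, e, e3]
      ring)
  exact h

theorem qrStirling1_shift (m n r : ℕ) (k : ℤ) :
    qrStirling1 (m + r) n k =
      ∑ i ∈ range (n + 1), X ^ (r * (n - i)) * qrise m (n - i) * qbinom n i *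
        qrStirling1 r i k := by
  induction n generalizing k with
  | zero =>
    simp [qrStirling1, qrise, qbinom_zero_right]
  | succ n ih =>
    rw [qrStirling1_succ, qrStirling1_shift_succ, ih, ih,
      show n + (m + r) = n + m + r from by omega]
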